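/- Let P be a nonempty finite poset on ground set K with m(P) minimal elements, and set d'(P) = max{ d(P|_A) : A a proper subset of K }. Then for every natural number m, 0 ≤ d(P)^m − e(m,P) ≤ 2^{m(P)−1} · d'(P)^m. Moreover, if #K = k then d'(P) ≤ 2^{k−1}, so d(P)^m − e(m,P) ≤ 2^{(k−1)(m+1)}. -/

import Mathlib

open scoped Classical
set_option linter.unusedSectionVars false

variable {α : Type*} [DecidableEq α]

/-- `q` is a partial order relation with ground set `S`: it is a set of pairs
contained in `S × S`, reflexive on `S`, transitive and antisymmetric. -/
def IsPOon (S : Finset α) (q : Finset (α × α)) : Prop :=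
  q ⊆ S ×ˢ S ∧ (∀ x ∈ S, (x, x) ∈ q) ∧
  (∀ x y z : α, (x, y) ∈ q → (y, z) ∈ q → (x, z) ∈ q) ∧
  (∀ x y : α, (x, y) ∈ q → (y, x) ∈ q → x = y)

/-- The relation induced on a subset `A` of the ground set. -/
def restrictRel (q : Finset (α × α)) (A : Finset α) : Finset (α × α) :=
  q.filter fun r => r.1 ∈ A ∧ r.2 ∈ A

/-- The downsets of the poset `(S, q)`. -/
noncomputable def downsets (S : Finset α) (q : Finset (α × α)) : Finset (Finset α) :=
  S.powerset.filter fun D => ∀ y ∈ D, ∀ x : α, (x, y) ∈ q → x ∈ D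

/-- `d(P)`, the number of downsets of the poset `(S, q)`. -/
noncomputable def dnum (S : Finset α) (q : Finset (α × α)) : ℕ :=
  (downsets S q).card

/-- The upsets of the poset `(S, q)`. -/
noncomputable def upsets (S : Finset α) (q : Finset (α × α)) : Finset (Finset α) :=
  S.powerset.filter fun U => ∀ x ∈ U, ∀ y : α, (x, y) ∈ q → y ∈ U

/-- Down-closure `QA = {x : x ≤_Q a for some a ∈ A}`. -/
def dcl (q : Finset (α × α)) (A : Finset α) : Finset α :=
  (q.filter fun r => r.2 ∈ A).image Prod.fst

/-- Up-closure `AQ = {y : a ≤_Q y for some a ∈ A}`. -/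
def ucl (q : Finset (α × α)) (A : Finset α) : Finset α :=
  (q.filter fun r => r.1 ∈ A).image Prod.snd

/-- The set of minimal elements of the poset `(S, q)`. -/
noncomputable def minset (S : Finset α) (q : Finset (α × α)) : Finset α :=
  S.filter fun x => ∀ y : α, (y, x) ∈ q → y = x

/-- `E(M, P)`: the partial orders on `M ∪ K` inducing `p` on `K` whose set of
minimal elements is exactly `M`. -/
noncomputable def extPOs (M K : Finset α) (p : Finset (α × α)) :
    Finset (Finset (α × α)) :=
  ((M ∪ K) ×ˢ (M ∪ K)).powerset.filter fun q =>
    IsPOon (M ∪ K) q ∧ restrictRel q K = p ∧ minset (M ∪ K) q = M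

/-- `A` is an antichain of the poset `(S, q)`. -/
def isAntichain (S : Finset α) (q : Finset (α × α)) (A : Finset α) : Prop :=
  A ⊆ S ∧ ∀ x ∈ A, ∀ y ∈ A, (x, y) ∈ q → x = y

/-- The posets `(S, q)` and `(T, r)` are order-isomorphic. -/
def POIso {β : Type*} (S : Finset α) (q : Finset (α × α))
    (T : Finset β) (r : Finset (β × β)) : Prop :=
  ∃ f : α → β, Set.BijOn f ↑S ↑T ∧ ∀ x ∈ S, ∀ y ∈ S, ((x, y) ∈ q ↔ (f x, f y) ∈ r)

/-- `C` is a chain of the poset `(S, q)`. -/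
def isChainOn (S : Finset α) (q : Finset (α × α)) (C : Finset α) : Prop :=
  C ⊆ S ∧ ∀ x ∈ C, ∀ y ∈ C, (x, y) ∈ q ∨ (y, x) ∈ q

/-- The height of the poset `(S, q)`: the maximal size of a chain. -/
noncomputable def heightP (S : Finset α) (q : Finset (α × α)) : ℕ :=
  (S.powerset.filter (isChainOn S q)).sup Finset.card


lemma mem_downsets {S : Finset α} {q : Finset (α × α)} {D : Finset α} :
    D ∈ downsets S q ↔ D ⊆ S ∧ ∀ y ∈ D, ∀ x : α, (x, y) ∈ q → x ∈ D := by
  simp [downsets, Finset.mem_filter, Finset.mem_powerset]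

lemma mem_upsets {S : Finset α} {q : Finset (α × α)} {U : Finset α} :
    U ∈ upsets S q ↔ U ⊆ S ∧ ∀ x ∈ U, ∀ y : α, (x, y) ∈ q → y ∈ U := by
  simp [upsets, Finset.mem_filter, Finset.mem_powerset]

lemma mem_minset {S : Finset α} {q : Finset (α × α)} {x : α} :
    x ∈ minset S q ↔ x ∈ S ∧ ∀ y : α, (y, x) ∈ q → y = x := by
  simp [minset, Finset.mem_filter]

lemma mem_dcl {q : Finset (α × α)} {A : Finset α} {a : α} :
    a ∈ dcl q A ↔ ∃ b ∈ A, (a, b) ∈ q := by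
  unfold dcl
  simp only [Finset.mem_image, Finset.mem_filter]
  constructor
  · rintro ⟨⟨x, y⟩, ⟨h1, h2⟩, rfl⟩
    exact ⟨y, h2, h1⟩
  · rintro ⟨b, hb, h⟩
    exact ⟨(a, b), ⟨h, hb⟩, rfl⟩

lemma card_upsets_eq (S : Finset α) (q : Finset (α × α)) (hq : q ⊆ S ×ˢ S) :
    (upsets S q).card = (downsets S q).card := by
  apply Finset.card_bij' (fun U _ => S \ U) (fun D _ => S \ D)
  · intro U hU
    rw [mem_upsets] at hU
    rw [mem_downsets]
    refine ⟨Finset.sdiff_subset, fun y hy x hxy => ?_⟩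
    have hx : x ∈ S := (Finset.mem_product.mp (hq hxy)).1
    rw [Finset.mem_sdiff] at hy ⊢
    exact ⟨hx, fun hxU => hy.2 (hU.2 x hxU y hxy)⟩
  · intro D hD
    rw [mem_downsets] at hD
    rw [mem_upsets]
    refine ⟨Finset.sdiff_subset, fun x hx y hxy => ?_⟩
    have hy : y ∈ S := (Finset.mem_product.mp (hq hxy)).2
    rw [Finset.mem_sdiff] at hx ⊢
    exact ⟨hy, fun hyD => hx.2 (hD.2 y hyD x hxy)⟩
  · intro U hU
    exact Finset.sdiff_sdiff_eq_self (mem_upsets.mp hU).1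
  · intro D hD
    exact Finset.sdiff_sdiff_eq_self (mem_downsets.mp hD).1

lemma minset_nonempty (K : Finset α) (hK : K.Nonempty) (p : Finset (α × α))
    (hp : IsPOon K p) : (minset K p).Nonempty := by
  obtain ⟨y, hyK, hmin⟩ := K.exists_min_image (fun y => (dcl p {y}).card) hK
  refine ⟨y, mem_minset.mpr ⟨hyK, ?_⟩⟩
  intro z hz
  by_contra hne
  have hzK : z ∈ K := (Finset.mem_product.mp (hp.1 hz)).1
  have hsub : dcl p {z} ⊆ dcl p {y} := by
    intro a ha
    rw [mem_dcl] at ha ⊢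
    obtain ⟨b, hb, hab⟩ := ha
    rw [Finset.mem_singleton] at hb
    rw [hb] at hab
    exact ⟨y, Finset.mem_singleton_self y, hp.2.2.1 a z y hab hz⟩
  have hy_not : y ∉ dcl p {z} := by
    intro h
    rw [mem_dcl] at h
    obtain ⟨b, hb, hyb⟩ := h
    rw [Finset.mem_singleton] at hb
    rw [hb] at hyb
    exact hne (hp.2.2.2 z y hz hyb)
  have hy_in : y ∈ dcl p {y} :=
    mem_dcl.mpr ⟨y, Finset.mem_singleton_self y, hp.2.1 y hyK⟩
  have hlt : (dcl p {z}).card < (dcl p {y}).card :=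
    Finset.card_lt_card ((Finset.ssubset_iff_of_subset hsub).mpr ⟨y, hy_in, hy_not⟩)
  exact absurd (hmin z hzK) (not_le.mpr hlt)

lemma card_avoid (K : Finset α) (p : Finset (α × α)) (hp : IsPOon K p)
    {y : α} (hy : y ∈ K) :
    ((upsets K p).filter fun U => y ∉ U).card ≤
      (K.powerset.erase K).sup fun A => dnum A (restrictRel p A) := by
  set A : Finset α := K \ dcl p {y} with hA
  have hAK : A ∈ K.powerset.erase K := by
    rw [Finset.mem_erase, Finset.mem_powerset]
    constructor
    · intro h
      have hyA : y ∈ A := h ▸ hy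
      rw [hA, Finset.mem_sdiff] at hyA
      exact hyA.2 (mem_dcl.mpr ⟨y, Finset.mem_singleton_self y, hp.2.1 y hy⟩)
    · exact Finset.sdiff_subset
  have key : ((upsets K p).filter fun U => y ∉ U).card ≤ dnum A (restrictRel p A) := by
    apply Finset.card_le_card_of_injOn (fun U => A \ U)
    · intro U hU
      rw [Finset.mem_coe, Finset.mem_filter, mem_upsets] at hU
      obtain ⟨⟨hUK, hUup⟩, hyU⟩ := hU
      have hUA : U ⊆ A := by
        intro z hz
        rw [hA, Finset.mem_sdiff]
        refine ⟨hUK hz, fun hzd => ?_⟩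
        rw [mem_dcl] at hzd
        obtain ⟨b, hb, hzb⟩ := hzd
        rw [Finset.mem_singleton] at hb
        rw [hb] at hzb
        exact hyU (hUup z hz y hzb)
      rw [Finset.mem_coe, mem_downsets]
      refine ⟨Finset.sdiff_subset, fun b hb a ha => ?_⟩
      rw [restrictRel, Finset.mem_filter] at ha
      obtain ⟨hab, haA, hbA⟩ := ha
      rw [Finset.mem_sdiff] at hb ⊢
      refine ⟨haA, fun haU => hb.2 ?_⟩
      exact hUup a haU b hab
    · intro U hU V hV hUV
      rw [Finset.coe_filter, Set.mem_setOf_eq] at hU hV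
      have hUA : U ⊆ A := by
        intro z hz
        rw [hA, Finset.mem_sdiff]
        obtain ⟨hU1, hU2⟩ := hU
        rw [mem_upsets] at hU1
        refine ⟨hU1.1 hz, fun hzd => ?_⟩
        rw [mem_dcl] at hzd
        obtain ⟨b, hb, hzb⟩ := hzd
        rw [Finset.mem_singleton] at hb
        rw [hb] at hzb
        exact hU2 (hU1.2 z hz y hzb)
      have hVA : V ⊆ A := by
        intro z hz
        rw [hA, Finset.mem_sdiff]
        obtain ⟨hV1, hV2⟩ := hV
        rw [mem_upsets] at hV1
        refine ⟨hV1.1 hz, fun hzd => ?_⟩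
        rw [mem_dcl] at hzd
        obtain ⟨b, hb, hzb⟩ := hzd
        rw [Finset.mem_singleton] at hb
        rw [hb] at hzb
        exact hV2 (hV1.2 z hz y hzb)
      have := congrArg (fun W => A \ W) hUV
      simpa [Finset.sdiff_sdiff_eq_self hUA, Finset.sdiff_sdiff_eq_self hVA] using this
  exact key.trans (Finset.le_sup (f := fun A => dnum A (restrictRel p A)) hAK)

lemma mem_extPOs {M K : Finset α} {p Q : Finset (α × α)} :
    Q ∈ extPOs M K p ↔ IsPOon (M ∪ K) Q ∧ restrictRel Q K = p ∧ minset (M ∪ K) Q = M := by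
  rw [extPOs, Finset.mem_filter, Finset.mem_powerset]
  constructor
  · rintro ⟨_, h⟩; exact h
  · intro h; exact ⟨h.1.1, h⟩

noncomputable def QofF (M : Finset α) (p : Finset (α × α)) (f : ∀ a ∈ M, Finset α) :
    Finset (α × α) :=
  p ∪ M.attach.biUnion fun x => insert (x.1, x.1) ((f x.1 x.2).image fun y => (x.1, y))

lemma mem_QofF {M : Finset α} {p : Finset (α × α)} {f : ∀ a ∈ M, Finset α} {a b : α} :
    (a, b) ∈ QofF M p f ↔ (a, b) ∈ p ∨ ∃ ha : a ∈ M, (b = a ∨ b ∈ f a ha) := by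
  unfold QofF
  simp only [Finset.mem_union, Finset.mem_biUnion, Finset.mem_attach, true_and,
    Finset.mem_insert, Finset.mem_image, Prod.mk.injEq]
  constructor
  · rintro (h | ⟨⟨x, hx⟩, (⟨rfl, rfl⟩ | ⟨y, hy, rfl, rfl⟩)⟩)
    · exact Or.inl h
    · exact Or.inr ⟨hx, Or.inl rfl⟩
    · exact Or.inr ⟨hx, Or.inr hy⟩
  · rintro (h | ⟨ha, (rfl | hb)⟩)
    · exact Or.inl h
    · exact Or.inr ⟨⟨b, ha⟩, Or.inl ⟨rfl, rfl⟩⟩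
    · exact Or.inr ⟨⟨a, ha⟩, Or.inr ⟨b, hb, rfl, rfl⟩⟩

lemma QofF_mem_extPOs {M K : Finset α} (hMK : Disjoint M K) {p : Finset (α × α)}
    (hp : IsPOon K p) {f : ∀ a ∈ M, Finset α}
    (hf : ∀ a (ha : a ∈ M), f a ha ∈ upsets K p)
    (hcov : ∀ y ∈ minset K p, ∃ a, ∃ ha : a ∈ M, y ∈ f a ha) :
    QofF M p f ∈ extPOs M K p := by
  have hfK : ∀ a (ha : a ∈ M), f a ha ⊆ K := fun a ha => (mem_upsets.mp (hf a ha)).1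
  have hfup : ∀ a (ha : a ∈ M), ∀ x ∈ f a ha, ∀ y : α, (x, y) ∈ p → y ∈ f a ha :=
    fun a ha => (mem_upsets.mp (hf a ha)).2
  have hMnK : ∀ a ∈ M, a ∉ K := fun a ha hk => (Finset.disjoint_left.mp hMK) ha hk
  have hsub : QofF M p f ⊆ (M ∪ K) ×ˢ (M ∪ K) := by
    rintro ⟨a, b⟩ h
    rw [mem_QofF] at h
    rw [Finset.mem_product]
    rcases h with h | ⟨ha, (rfl | hb)⟩
    · have := Finset.mem_product.mp (hp.1 h)
      exact ⟨Finset.mem_union_right _ this.1, Finset.mem_union_right _ this.2⟩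
    · exact ⟨Finset.mem_union_left _ ha, Finset.mem_union_left _ ha⟩
    · exact ⟨Finset.mem_union_left _ ha, Finset.mem_union_right _ (hfK a ha hb)⟩
  have hrefl : ∀ x ∈ M ∪ K, (x, x) ∈ QofF M p f := by
    intro x hx
    rw [Finset.mem_union] at hx
    rw [mem_QofF]
    rcases hx with hx | hx
    · exact Or.inr ⟨hx, Or.inl rfl⟩
    · exact Or.inl (hp.2.1 x hx)
  have htrans : ∀ x y z : α, (x, y) ∈ QofF M p f → (y, z) ∈ QofF M p f →
      (x, z) ∈ QofF M p f := by
    intro x y z hxy hyz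
    rw [mem_QofF] at hxy hyz ⊢
    rcases hxy with hxy | ⟨hx, (rfl | hy)⟩
    · have hyK : y ∈ K := (Finset.mem_product.mp (hp.1 hxy)).2
      rcases hyz with hyz | ⟨hy', _⟩
      · exact Or.inl (hp.2.2.1 x y z hxy hyz)
      · exact absurd hyK (hMnK y hy')
    · exact hyz
    · have hyK : y ∈ K := hfK x hx hy
      rcases hyz with hyz | ⟨hy', _⟩
      · exact Or.inr ⟨hx, Or.inr (hfup x hx y hy z hyz)⟩
      · exact absurd hyK (hMnK y hy')
  have hanti : ∀ x y : α, (x, y) ∈ QofF M p f → (y, x) ∈ QofF M p f → x = y := by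
    intro x y hxy hyx
    rw [mem_QofF] at hxy hyx
    rcases hxy with hxy | ⟨hx, (rfl | hy)⟩
    · have hxK : x ∈ K := (Finset.mem_product.mp (hp.1 hxy)).1
      have hyK : y ∈ K := (Finset.mem_product.mp (hp.1 hxy)).2
      rcases hyx with hyx | ⟨hy', _⟩
      · exact hp.2.2.2 x y hxy hyx
      · exact absurd hyK (hMnK y hy')
    · rfl
    · have hyK : y ∈ K := hfK x hx hy
      rcases hyx with hyx | ⟨hy', _⟩
      · exact absurd (Finset.mem_product.mp (hp.1 hyx)).2 (hMnK x hx)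
      · exact absurd hyK (hMnK y hy')
  have hres : restrictRel (QofF M p f) K = p := by
    ext ⟨a, b⟩
    rw [restrictRel, Finset.mem_filter, mem_QofF]
    constructor
    · rintro ⟨h | ⟨ha, _⟩, haK, hbK⟩
      · exact h
      · exact absurd haK (hMnK a ha)
    · intro h
      have := Finset.mem_product.mp (hp.1 h)
      exact ⟨Or.inl h, this.1, this.2⟩
  have hmin : minset (M ∪ K) (QofF M p f) = M := by
    ext x
    rw [mem_minset]
    constructor
    · rintro ⟨hxMK, hxmin⟩
      rw [Finset.mem_union] at hxMK
      rcases hxMK with hxM | hxK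
      · exact hxM
      · have hxminp : x ∈ minset K p := by
          rw [mem_minset]
          exact ⟨hxK, fun y hyx => hxmin y (mem_QofF.mpr (Or.inl hyx))⟩
        obtain ⟨a, ha, hxf⟩ := hcov x hxminp
        have : a = x := hxmin a (mem_QofF.mpr (Or.inr ⟨ha, Or.inr hxf⟩))
        rw [← this]
        exact ha
    · intro hxM
      refine ⟨Finset.mem_union_left _ hxM, fun y hyx => ?_⟩
      rw [mem_QofF] at hyx
      rcases hyx with hyx | ⟨hy, (rfl | hx)⟩
      · exact absurd (Finset.mem_product.mp (hp.1 hyx)).2 (hMnK x hxM)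
      · rfl
      · exact absurd (hfK y hy hx) (hMnK x hxM)
  exact mem_extPOs.mpr ⟨⟨hsub, hrefl, htrans, hanti⟩, hres, hmin⟩

lemma QofF_apply {M K : Finset α} (hMK : Disjoint M K) {p : Finset (α × α)}
    {f : ∀ a ∈ M, Finset α} (hf : ∀ a (ha : a ∈ M), f a ha ∈ upsets K p)
    (hpK : p ⊆ K ×ˢ K) {a : α} (ha : a ∈ M) :
    K.filter (fun y => (a, y) ∈ QofF M p f) = f a ha := by
  ext y
  rw [Finset.mem_filter, mem_QofF]
  constructor
  · rintro ⟨hyK, h | ⟨ha', (rfl | hy)⟩⟩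
    · exact absurd (Finset.mem_product.mp (hpK h)).1
        (fun hk => (Finset.disjoint_left.mp hMK) ha hk)
    · exact absurd hyK (fun hk => (Finset.disjoint_left.mp hMK) ha' hk)
    · exact hy
  · intro hy
    exact ⟨(mem_upsets.mp (hf a ha)).1 hy, Or.inr ⟨ha, Or.inr hy⟩⟩

lemma FofQ_mem_upsets {M K : Finset α} {p Q : Finset (α × α)}
    (hQ : Q ∈ extPOs M K p) (a : α) :
    (K.filter fun y => (a, y) ∈ Q) ∈ upsets K p := by
  obtain ⟨hPO, hres, hmin⟩ := mem_extPOs.mp hQ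
  rw [mem_upsets]
  refine ⟨Finset.filter_subset _ _, fun x hx y hxy => ?_⟩
  rw [Finset.mem_filter] at hx
  have hxyQ : (x, y) ∈ Q := by
    rw [← hres] at hxy
    exact (Finset.mem_filter.mp hxy).1
  have hyK : y ∈ K := by
    rw [← hres] at hxy
    exact (Finset.mem_filter.mp hxy).2.2
  rw [Finset.mem_filter]
  exact ⟨hyK, hPO.2.2.1 a x y hx.2 hxyQ⟩

lemma mem_of_mem_extPOs {M K : Finset α} (hMK : Disjoint M K) {p Q : Finset (α × α)}
    (hQ : Q ∈ extPOs M K p) {a b : α} :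
    (a, b) ∈ Q ↔ (a, b) ∈ p ∨ (a ∈ M ∧ (b = a ∨ b ∈ K.filter fun y => (a, y) ∈ Q)) := by
  obtain ⟨hPO, hres, hmin⟩ := mem_extPOs.mp hQ
  have hMnK : ∀ x ∈ M, x ∉ K := fun x hx hk => (Finset.disjoint_left.mp hMK) hx hk
  constructor
  · intro hab
    have hmemab := Finset.mem_product.mp (hPO.1 hab)
    have haMK := hmemab.1
    have hbMK := hmemab.2
    rw [Finset.mem_union] at haMK hbMK
    rcases haMK with haM | haK
    · rcases hbMK with hbM | hbK
      · -- b is minimal, so a = b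
        have hbmin : ∀ y : α, (y, b) ∈ Q → y = b := by
          have : b ∈ minset (M ∪ K) Q := by rw [hmin]; exact hbM
          exact (mem_minset.mp this).2
        exact Or.inr ⟨haM, Or.inl (hbmin a hab).symm⟩
      · by_cases hbM : b ∈ M
        · have hbmin : ∀ y : α, (y, b) ∈ Q → y = b := by
            have : b ∈ minset (M ∪ K) Q := by rw [hmin]; exact hbM
            exact (mem_minset.mp this).2
          exact Or.inr ⟨haM, Or.inl (hbmin a hab).symm⟩
        · exact Or.inr ⟨haM, Or.inr (Finset.mem_filter.mpr ⟨hbK, hab⟩)⟩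
    · rcases hbMK with hbM | hbK
      · have hbmin : ∀ y : α, (y, b) ∈ Q → y = b := by
          have : b ∈ minset (M ∪ K) Q := by rw [hmin]; exact hbM
          exact (mem_minset.mp this).2
        have : a = b := hbmin a hab
        exact absurd haK (this ▸ hMnK b hbM)
      · rw [← hres]
        exact Or.inl (Finset.mem_filter.mpr ⟨hab, haK, hbK⟩)
  · rintro (h | ⟨haM, (rfl | hb)⟩)
    · rw [← hres] at h
      exact (Finset.mem_filter.mp h).1
    · exact hPO.2.1 b (Finset.mem_union_left _ haM)
    · exact (Finset.mem_filter.mp hb).2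

/-- Theorem 6.2: with `d'(P) = max{d(P|_A) : A ⊊ K}` and `m(P)` the number of
minimal points, `0 ≤ d(P)^m − e(m,P) ≤ 2^{m(P)−1} d'(P)^m`; moreover
`d'(P) ≤ 2^{k−1}` and `d(P)^m − e(m,P) ≤ 2^{(k−1)(m+1)}`. -/
theorem stmt_17 (M K : Finset α) (hMK : Disjoint M K) (hK : K.Nonempty)
    (p : Finset (α × α)) (hp : IsPOon K p) :
    ((extPOs M K p).card ≤ (dnum K p) ^ M.card) ∧
    ((dnum K p) ^ M.card - (extPOs M K p).card ≤
      2 ^ ((minset K p).card - 1) *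
        ((K.powerset.erase K).sup fun A => dnum A (restrictRel p A)) ^ M.card) ∧
    (((K.powerset.erase K).sup fun A => dnum A (restrictRel p A)) ≤
      2 ^ (K.card - 1)) ∧
    ((dnum K p) ^ M.card - (extPOs M K p).card ≤
      2 ^ ((K.card - 1) * (M.card + 1))) := by
  classical
  set d' : ℕ := (K.powerset.erase K).sup fun A => dnum A (restrictRel p A) with hd'
  set u : Finset (Finset α) := upsets K p with hu
  have hud : u.card = dnum K p := card_upsets_eq K p hp.1
  set Pi : Finset (∀ a ∈ M, Finset α) := M.pi (fun _ => u) with hPi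
  have hPicard : Pi.card = (dnum K p) ^ M.card := by
    rw [hPi, Finset.card_pi, Finset.prod_const, hud]
  -- Part 1
  have part1 : (extPOs M K p).card ≤ (dnum K p) ^ M.card := by
    rw [← hPicard]
    apply Finset.card_le_card_of_injOn
      (fun Q => fun a (_ : a ∈ M) => K.filter fun y => (a, y) ∈ Q)
    · intro Q hQ
      rw [hPi, Finset.mem_coe, Finset.mem_pi]
      intro a _
      exact FofQ_mem_upsets hQ a
    · intro Q hQ Q' hQ' h
      rw [Finset.mem_coe] at hQ hQ'
      have hfilter : ∀ a ∈ M,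
          (K.filter fun y => (a, y) ∈ Q) = (K.filter fun y => (a, y) ∈ Q') :=
        fun a ha => congrFun (congrFun h a) ha
      ext ⟨a, b⟩
      rw [mem_of_mem_extPOs hMK hQ, mem_of_mem_extPOs hMK hQ']
      constructor
      · rintro (hab | ⟨haM, hb⟩)
        · exact Or.inl hab
        · rw [← hfilter a haM]
          exact Or.inr ⟨haM, hb⟩
      · rintro (hab | ⟨haM, hb⟩)
        · exact Or.inl hab
        · rw [hfilter a haM]
          exact Or.inr ⟨haM, hb⟩
  -- the good tuples
  set G := Pi.filter (fun f => ∀ y ∈ minset K p, ∃ a, ∃ ha : a ∈ M, y ∈ f a ha) with hG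
  have hGle : G.card ≤ (extPOs M K p).card := by
    apply Finset.card_le_card_of_injOn (fun f => QofF M p f)
    · intro f hf
      rw [hG, Finset.mem_coe, Finset.mem_filter, hPi, Finset.mem_pi] at hf
      exact QofF_mem_extPOs hMK hp (fun a ha => hf.1 a ha) hf.2
    · intro f hf g hg hfg
      rw [Finset.mem_coe, hG, Finset.mem_filter, hPi, Finset.mem_pi] at hf hg
      funext a ha
      rw [← QofF_apply hMK (fun a ha => hf.1 a ha) hp.1 ha,
          ← QofF_apply hMK (fun a ha => hg.1 a ha) hp.1 ha]
      have hfg' : QofF M p f = QofF M p g := hfg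
      rw [hfg']
  have hsplit : (Pi.filter fun f => ¬ ∀ y ∈ minset K p, ∃ a, ∃ ha : a ∈ M, y ∈ f a ha).card
      = Pi.card - G.card := by
    have := Finset.card_filter_add_card_filter_not
      (s := Pi) (p := fun f => ∀ y ∈ minset K p, ∃ a, ∃ ha : a ∈ M, y ∈ f a ha)
    rw [hG]
    exact Nat.eq_sub_of_add_eq' this
  -- per-minimal-element bound
  have hbound : ∀ y ∈ minset K p,
      (Pi.filter fun f => ∀ a (ha : a ∈ M), y ∉ f a ha).card ≤ d' ^ M.card := by
    intro y hy
    have hyK : y ∈ K := (mem_minset.mp hy).1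
    have hsub2 : (Pi.filter fun f => ∀ a (ha : a ∈ M), y ∉ f a ha)
        ⊆ M.pi (fun _ => u.filter fun U => y ∉ U) := by
      intro f hf
      rw [Finset.mem_filter, hPi, Finset.mem_pi] at hf
      rw [Finset.mem_pi]
      intro a ha
      rw [Finset.mem_filter]
      exact ⟨hf.1 a ha, hf.2 a ha⟩
    calc (Pi.filter fun f => ∀ a (ha : a ∈ M), y ∉ f a ha).card
        ≤ (M.pi (fun _ => u.filter fun U => y ∉ U)).card := Finset.card_le_card hsub2
      _ = (u.filter fun U => y ∉ U).card ^ M.card := by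
          rw [Finset.card_pi, Finset.prod_const]
      _ ≤ d' ^ M.card := Nat.pow_le_pow_left (card_avoid K p hp hyK) _
  have part2main : (dnum K p) ^ M.card - (extPOs M K p).card ≤
      (minset K p).card * d' ^ M.card := by
    have h1 : (dnum K p) ^ M.card - (extPOs M K p).card ≤
        (dnum K p) ^ M.card - G.card := Nat.sub_le_sub_left hGle _
    have hbadsub : (Pi.filter fun f => ¬ ∀ y ∈ minset K p, ∃ a, ∃ ha : a ∈ M, y ∈ f a ha)
        ⊆ (minset K p).biUnion
          (fun y => Pi.filter fun f => ∀ a (ha : a ∈ M), y ∉ f a ha) := by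
      intro f hf
      rw [Finset.mem_filter] at hf
      obtain ⟨hfPi, hbad⟩ := hf
      push_neg at hbad
      obtain ⟨y, hy, hav⟩ := hbad
      rw [Finset.mem_biUnion]
      exact ⟨y, hy, Finset.mem_filter.mpr ⟨hfPi, hav⟩⟩
    calc (dnum K p) ^ M.card - (extPOs M K p).card
        ≤ (dnum K p) ^ M.card - G.card := h1
      _ = (Pi.filter fun f => ¬ ∀ y ∈ minset K p, ∃ a, ∃ ha : a ∈ M, y ∈ f a ha).card := by
          rw [hsplit, hPicard]
      _ ≤ ((minset K p).biUnion
            (fun y => Pi.filter fun f => ∀ a (ha : a ∈ M), y ∉ f a ha)).card :=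
          Finset.card_le_card hbadsub
      _ ≤ ∑ y ∈ minset K p,
            (Pi.filter fun f => ∀ a (ha : a ∈ M), y ∉ f a ha).card :=
          Finset.card_biUnion_le
      _ ≤ ∑ _y ∈ minset K p, d' ^ M.card := Finset.sum_le_sum hbound
      _ = (minset K p).card * d' ^ M.card := by
          rw [Finset.sum_const, smul_eq_mul]
  have hmpos : 1 ≤ (minset K p).card :=
    Finset.card_pos.mpr (minset_nonempty K hK p hp)
  have hm2 : (minset K p).card ≤ 2 ^ ((minset K p).card - 1) := by
    calc (minset K p).card = (minset K p).card - 1 + 1 :=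
          (Nat.succ_pred_eq_of_pos hmpos).symm
      _ ≤ 2 ^ ((minset K p).card - 1) := Nat.lt_two_pow_self (n := (minset K p).card - 1)
  have part2 : (dnum K p) ^ M.card - (extPOs M K p).card ≤
      2 ^ ((minset K p).card - 1) * d' ^ M.card :=
    part2main.trans (Nat.mul_le_mul_right _ hm2)
  -- Part 3
  have part3 : d' ≤ 2 ^ (K.card - 1) := by
    rw [hd']
    apply Finset.sup_le
    intro A hA
    rw [Finset.mem_erase, Finset.mem_powerset] at hA
    have hAcard : A.card ≤ K.card - 1 := by
      exact Nat.le_sub_one_of_lt (Finset.card_lt_card (lt_of_le_of_ne hA.2 hA.1))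
    calc dnum A (restrictRel p A)
        ≤ A.powerset.card := Finset.card_le_card (Finset.filter_subset _ _)
      _ = 2 ^ A.card := Finset.card_powerset A
      _ ≤ 2 ^ (K.card - 1) := Nat.pow_le_pow_right (by norm_num) hAcard
  -- Part 4
  have hmK : (minset K p).card ≤ K.card := Finset.card_le_card (Finset.filter_subset _ _)
  have part4 : (dnum K p) ^ M.card - (extPOs M K p).card ≤
      2 ^ ((K.card - 1) * (M.card + 1)) := by
    refine part2.trans ?_
    calc 2 ^ ((minset K p).card - 1) * d' ^ M.card
        ≤ 2 ^ (K.card - 1) * (2 ^ (K.card - 1)) ^ M.card :=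
          Nat.mul_le_mul (Nat.pow_le_pow_right (by norm_num) (Nat.sub_le_sub_right hmK 1))
            (Nat.pow_le_pow_left part3 _)
      _ = 2 ^ ((K.card - 1) * (M.card + 1)) := by
          rw [← pow_mul, ← pow_add]
          congr 1
          ring
  exact ⟨part1, part2, part3, part4⟩
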